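/- Fix ε ∈ (0,1) and γ > 0, and set c_ε = γε. Let G′ be an (n, ε, γ)-good graph on N vertices, and let S_1, …, S_k be a connected partition of V(G′) such that S_k has the largest size among the blocks and the blocks S_1, …, S_{k−1} form exactly one super-block. For each i ∈ [k−1] let s_i = |S_i|; let E′ be the set of edges of G′ with endpoints in two different blocks, V′ the number of vertices incident to at least one edge of E′, C_2 the number of connected components with more than one vertex of the subgraph spanned by E′, and C_1 = k − 1. Suppose that s_1 + ⋯ + s_{k−1} ≤ N/2 and that at least one of S_1, …, S_{k−1} contains a vertex of degree at least 3 in G′. Then V′ − C_2 − C_1 ≥ c_ε(s_1 + ⋯ + s_{k−1})/(400 log log n), and V′ − C_2 − C_1 ≥ 2. -/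

import Mathlib

/-- The set of edges of `G` with exactly one endpoint in `S`. -/
def edgeBoundary {V : Type*} (G : SimpleGraph V) (S : Set V) : Set (Sym2 V) :=
  {e | ∃ a b, e = s(a, b) ∧ G.Adj a b ∧ a ∈ S ∧ b ∉ S}

/-- `G` is an `α`-expander. -/
def IsExpander {V : Type*} [Fintype V] (G : SimpleGraph V) (α : ℝ) : Prop :=
  ∀ S : Finset V, S.Nonempty → 2 * S.card ≤ Fintype.card V →
    α * (∑ v ∈ S, (Nat.card (G.neighborSet v) : ℝ)) ≤ (Nat.card (edgeBoundary G ↑S) : ℝ)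

/-- `H` is an `(n, ε, γ)`-good graph. -/
def IsGood (n : ℕ) (ε γ : ℝ) {V : Type*} [Fintype V] (H : SimpleGraph V) : Prop :=
  ((ε ^ 3 * n / 10 ^ 5 : ℝ) ≤ (Nat.card {v : V // 3 ≤ Nat.card (H.neighborSet v)} : ℝ)) ∧
  IsExpander H (γ * ε) ∧
  (∀ (v : V) (w : H.Walk v v), w.IsCycle → Real.log n / (2 * ε) < (w.length : ℝ)) ∧
  (∀ (u v : V) (w : H.Walk u v), w.IsPath →
      (∀ x ∈ w.support, x ≠ u → x ≠ v → Nat.card (H.neighborSet x) = 2) →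
      (w.length : ℝ) < 1 / (γ * ε)) ∧
  (∀ v : V, (Nat.card (H.neighborSet v) : ℝ) ≤ 100 * Real.log (Real.log n) ∧
      2 ≤ Nat.card (H.neighborSet v)) ∧
  (∀ S : Set V, S.Nonempty → S ≠ Set.univ → 2 ≤ Nat.card (edgeBoundary H S)) ∧
  (∀ S : Set V, 2 * Nat.card S ≤ Fintype.card V →
      (∃ v ∈ S, 3 ≤ Nat.card (H.neighborSet v)) →
      3 ≤ Nat.card {v : V // v ∉ S ∧ ∃ u ∈ S, H.Adj u v})

/-- `P` is a connected partition of the vertex set of `G` (blocks are the fibers of `P`). -/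
def ConnPartition {V : Type*} (G : SimpleGraph V) {k : ℕ} (P : V → Fin k) : Prop :=
  Function.Surjective P ∧ ∀ i : Fin k, (SimpleGraph.induce (P ⁻¹' {i}) G).Connected

/-- The set of edges of `G` whose endpoints lie in two different blocks of `P`. -/
def crossSet {V : Type*} (G : SimpleGraph V) {k : ℕ} (P : V → Fin k) : Set (Sym2 V) :=
  {e | e ∈ G.edgeSet ∧ ¬ (e.map P).IsDiag}

/-- The subgraph spanned by the cross edges of `P`. -/
def spannedGraph {V : Type*} (G : SimpleGraph V) {k : ℕ} (P : V → Fin k) : SimpleGraph V :=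
  SimpleGraph.fromEdgeSet (crossSet G P)

/-- `V'`: the number of vertices incident to at least one cross edge. -/
noncomputable def Vprime {V : Type*} (G : SimpleGraph V) {k : ℕ} (P : V → Fin k) : ℕ :=
  Nat.card {v : V // ∃ e ∈ crossSet G P, v ∈ e}

/-- `C₂`: the number of connected components with more than one vertex of the subgraph
spanned by the cross edges. -/
noncomputable def C2count {V : Type*} (G : SimpleGraph V) {k : ℕ} (P : V → Fin k) : ℕ :=
  Nat.card {c : (spannedGraph G P).ConnectedComponent //
    ∃ v w : V, v ≠ w ∧ (spannedGraph G P).connectedComponentMk v = c ∧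
      (spannedGraph G P).connectedComponentMk w = c}

/-- The auxiliary graph on the blocks other than the last: two blocks are adjacent when
there is at least one edge of `H` between them.  The partition has exactly one super-block
iff this graph is connected. -/
def auxGraph {V : Type*} (H : SimpleGraph V) {k : ℕ} (P : V → Fin (k + 1)) :
    SimpleGraph {i : Fin (k + 1) // i ≠ Fin.last k} where
  Adj i j := i ≠ j ∧ ∃ a b, H.Adj a b ∧ P a = i.1 ∧ P b = j.1
  symm := ⟨fun _ _ ⟨hij, a, b, hab, ha, hb⟩ => ⟨hij.symm, b, a, hab.symm, hb, ha⟩⟩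
  loopless := ⟨fun _ h => h.1 rfl⟩

open SimpleGraph

/-- A connected finite graph has at least `|V| - 1` edges. -/
lemma stmt11_conn_card_le {α : Type*} [Finite α] (G : SimpleGraph α) (hG : G.Connected) :
    Nat.card α ≤ Nat.card G.edgeSet + 1 := by
  classical
  cases nonempty_fintype α
  obtain ⟨r⟩ := hG.nonempty
  have hpar : ∀ v : {v : α // v ≠ r}, ∃ u, G.Adj v.1 u ∧ G.dist u r + 1 = G.dist v.1 r := by
    rintro ⟨v, hv⟩
    have hreach : G.Reachable v r := hG.preconnected v r
    obtain ⟨w, hw⟩ := hreach.exists_walk_length_eq_dist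
    have hd0 : G.dist v r ≠ 0 := by
      rw [SimpleGraph.dist_ne_zero_iff_ne_and_reachable]; exact ⟨hv, hreach⟩
    cases w with
    | nil => simp at hd0
    | @cons _ u _ h w' =>
      refine ⟨u, h, ?_⟩
      show G.dist u r + 1 = G.dist v r
      have h1 : G.dist u r ≤ w'.length := SimpleGraph.dist_le w'
      have h2 : G.dist v r ≤ G.dist v u + G.dist u r := hG.dist_triangle
      have h3 : G.dist v u ≤ 1 := by
        simpa using SimpleGraph.dist_le (SimpleGraph.Walk.cons h SimpleGraph.Walk.nil)
      simp [SimpleGraph.Walk.length_cons] at hw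
      omega
  choose u hadj hdist using hpar
  have hinj : Function.Injective (fun v : {v : α // v ≠ r} =>
      (⟨s(v.1, u v), (hadj v)⟩ : G.edgeSet)) := by
    rintro v₁ v₂ h
    have h := Sym2.eq_iff.mp (congrArg Subtype.val h)
    rcases h with ⟨h1, h2⟩ | ⟨h1, h2⟩
    · exact Subtype.ext h1
    · exfalso
      have d1 := hdist v₁
      have d2 := hdist v₂
      rw [h1] at d1
      rw [← h2] at d2
      omega
  have hle : Nat.card {v : α // v ≠ r} ≤ Nat.card G.edgeSet :=
    Nat.card_le_card_of_injective _ hinj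
  have hcc : Nat.card {v : α // v ≠ r} + 1 = Nat.card α := by
    rw [Nat.card_eq_fintype_card, Nat.card_eq_fintype_card]
    have : Fintype.card {v : α // v ≠ r} = Fintype.card α - 1 := by
      simp [Fintype.card_subtype_compl]
    have hpos : 0 < Fintype.card α := Fintype.card_pos_iff.mpr ⟨r⟩
    omega
  omega

section Main

variable {V : Type*} [Fintype V] {k : ℕ} (G' : SimpleGraph V) (P : V → Fin (k + 1))

/-- The union of the non-last blocks. -/
def Wset : Set V := {v | P v ≠ Fin.last k}

/-- The vertices incident to a cross edge. -/
def Aset : Set V := {v | ∃ e ∈ crossSet G' P, v ∈ e}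

/-- Components of the spanned graph with at least two vertices. -/
def multC (c : (spannedGraph G' P).ConnectedComponent) : Prop :=
  ∃ v w : V, v ≠ w ∧ (spannedGraph G' P).connectedComponentMk v = c ∧
      (spannedGraph G' P).connectedComponentMk w = c

lemma cross_of_adj {a b : V} (ha : G'.Adj a b) (hne : P a ≠ P b) :
    s(a, b) ∈ crossSet G' P := by
  refine ⟨ha, ?_⟩
  simpa [crossSet, Sym2.map_pair_eq] using hne

lemma cross_P_ne {a b : V} (h : s(a, b) ∈ crossSet G' P) : P a ≠ P b := by
  intro hPab
  exact h.2 (by simp [Sym2.map_pair_eq, hPab])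

lemma spanned_adj {a b : V} :
    (spannedGraph G' P).Adj a b ↔ s(a, b) ∈ crossSet G' P ∧ a ≠ b := by
  simp [spannedGraph, SimpleGraph.fromEdgeSet_adj]

lemma mem_A_of_spanned_adj {a b : V} (h : (spannedGraph G' P).Adj a b) : a ∈ Aset G' P := by
  rw [spanned_adj] at h
  exact ⟨s(a, b), h.1, by simp⟩

lemma mem_A_of_walk {v z : V} (w : (spannedGraph G' P).Walk v z) (h : v ≠ z) :
    v ∈ Aset G' P := by
  cases w with
  | nil => exact absurd rfl h
  | cons h' p => exact mem_A_of_spanned_adj G' P h'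

lemma first_adj {v z : V} (w : (spannedGraph G' P).Walk v z) (h : v ≠ z) :
    ∃ u, (spannedGraph G' P).Adj v u := by
  cases w with
  | nil => exact absurd rfl h
  | cons h' p => exact ⟨_, h'⟩

lemma mem_A_of_mult {v : V} (h : multC G' P ((spannedGraph G' P).connectedComponentMk v)) :
    v ∈ Aset G' P := by
  obtain ⟨x, y, hxy, hx, hy⟩ := h
  have hz : ∃ z, z ≠ v ∧ (spannedGraph G' P).Reachable v z := by
    rcases eq_or_ne x v with rfl | hxv
    · exact ⟨y, fun h => hxy h.symm,
        (SimpleGraph.ConnectedComponent.eq.mp (hy.trans hx.symm)).symm⟩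
    · exact ⟨x, hxv, (SimpleGraph.ConnectedComponent.eq.mp (hx.trans hx.symm ▸ hx)).symm⟩
  obtain ⟨z, hzv, ⟨w⟩⟩ := hz
  exact mem_A_of_walk G' P w (Ne.symm hzv)

/-- Each multi-vertex component contains a vertex outside the last block. -/
lemma exists_nonlast_of_mult {c : (spannedGraph G' P).ConnectedComponent} (hc : multC G' P c) :
    ∃ v, (spannedGraph G' P).connectedComponentMk v = c ∧ P v ≠ Fin.last k := by
  obtain ⟨x, y, hxy, hx, hy⟩ := hc
  have hr : (spannedGraph G' P).Reachable x y :=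
    SimpleGraph.ConnectedComponent.eq.mp (hx.trans hy.symm)
  obtain ⟨w⟩ := hr
  obtain ⟨u, hu⟩ := first_adj G' P w hxy
  have hcross : s(x, u) ∈ crossSet G' P ∧ x ≠ u := (spanned_adj G' P).mp hu
  have hPne : P x ≠ P u := cross_P_ne G' P hcross.1
  have hmku : (spannedGraph G' P).connectedComponentMk u = c := by
    rw [← hx]
    exact SimpleGraph.ConnectedComponent.eq.mpr hu.symm.reachable
  rcases eq_or_ne (P x) (Fin.last k) with hPx | hPx
  · exact ⟨u, hmku, fun h => hPne (hPx.trans h.symm)⟩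
  · exact ⟨x, hx, hPx⟩

/-- The bipartite incidence graph between non-last blocks and multi-vertex components. -/
def Bgr : SimpleGraph ({i : Fin (k + 1) // i ≠ Fin.last k} ⊕ {c : (spannedGraph G' P).ConnectedComponent // multC G' P c}) where
  Adj x y :=
    (∃ i c v, x = Sum.inl i ∧ y = Sum.inr c ∧ P v = i.1 ∧
      (spannedGraph G' P).connectedComponentMk v = c.1) ∨
    (∃ i c v, x = Sum.inr c ∧ y = Sum.inl i ∧ P v = i.1 ∧
      (spannedGraph G' P).connectedComponentMk v = c.1)
  symm := by
    constructor
    rintro x y (⟨i, c, v, rfl, rfl, h1, h2⟩ | ⟨i, c, v, rfl, rfl, h1, h2⟩)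
    · exact Or.inr ⟨i, c, v, rfl, rfl, h1, h2⟩
    · exact Or.inl ⟨i, c, v, rfl, rfl, h1, h2⟩
  loopless := by
    constructor
    rintro x (⟨i, c, v, rfl, h, -⟩ | ⟨i, c, v, rfl, h, -⟩) <;> simp at h

lemma Bgr_edge_form (e : Sym2 _) (he : e ∈ (Bgr G' P).edgeSet) :
    ∃ i c v, e = s(Sum.inl i, Sum.inr c) ∧ P v = i.1 ∧
      (spannedGraph G' P).connectedComponentMk v = c.1 := by
  induction e using Sym2.ind with
  | _ x y =>
    rw [SimpleGraph.mem_edgeSet] at he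
    rcases he with ⟨i, c, v, rfl, rfl, h1, h2⟩ | ⟨i, c, v, rfl, rfl, h1, h2⟩
    · exact ⟨i, c, v, rfl, h1, h2⟩
    · exact ⟨i, c, v, Sym2.eq_swap, h1, h2⟩

lemma Bgr_connected (hsuper : (auxGraph G' P).Connected) : (Bgr G' P).Connected := by
  have hBlk : ∀ i j, (Bgr G' P).Reachable (Sum.inl i) (Sum.inl j) := by
    intro i j
    obtain ⟨w⟩ := hsuper.preconnected i j
    induction w with
    | nil => exact SimpleGraph.Reachable.refl _
    | @cons a b _ h p ih =>
      refine SimpleGraph.Reachable.trans ?_ ih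
      obtain ⟨hne, x, y, hxy, hPx, hPy⟩ := show a ≠ b ∧ ∃ x y, G'.Adj x y ∧ P x = a.1 ∧ P y = b.1 from h
      have hx : P x ≠ P y := by
        rw [hPx, hPy]; exact fun hh => hne (Subtype.ext hh)
      have hadj : (spannedGraph G' P).Adj x y :=
        (spanned_adj G' P).mpr ⟨cross_of_adj G' P hxy hx, fun hh => hx (by rw [hh])⟩
      set c : {c : (spannedGraph G' P).ConnectedComponent // multC G' P c} :=
        ⟨(spannedGraph G' P).connectedComponentMk x,
          ⟨x, y, fun hh => hx (by rw [hh]), rfl,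
            SimpleGraph.ConnectedComponent.eq.mpr hadj.symm.reachable⟩⟩ with hc
      have h1 : (Bgr G' P).Adj (Sum.inl a) (Sum.inr c) := Or.inl ⟨a, c, x, rfl, rfl, hPx, rfl⟩
      have h2 : (Bgr G' P).Adj (Sum.inr c) (Sum.inl b) :=
        Or.inr ⟨b, c, y, rfl, rfl, hPy,
          (SimpleGraph.ConnectedComponent.eq.mpr hadj.symm.reachable)⟩
      exact (h1.reachable).trans h2.reachable
  have hComp : ∀ c, ∃ i, (Bgr G' P).Adj (Sum.inr c) (Sum.inl i) := by
    rintro ⟨c, hc⟩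
    obtain ⟨v, hv, hPv⟩ := exists_nonlast_of_mult G' P hc
    exact ⟨⟨P v, hPv⟩, Or.inr ⟨⟨P v, hPv⟩, ⟨c, hc⟩, v, rfl, rfl, rfl, hv⟩⟩
  haveI hne : Nonempty {i : Fin (k + 1) // i ≠ Fin.last k} := hsuper.nonempty
  constructor
  rintro (i | c) (j | d)
  · exact hBlk i j
  · obtain ⟨j, hj⟩ := hComp d
    exact (hBlk i j).trans hj.symm.reachable
  · obtain ⟨j, hj⟩ := hComp c
    exact hj.reachable.trans (hBlk j _)
  · obtain ⟨i, hi⟩ := hComp c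
    obtain ⟨j, hj⟩ := hComp d
    exact hi.reachable.trans ((hBlk i j).trans hj.symm.reachable)

lemma Bgr_edge_card :
    Nat.card (Bgr G' P).edgeSet ≤ Nat.card ↥(Aset G' P ∩ Wset P) := by
  classical
  have cls : ∀ e : (Bgr G' P).edgeSet, ∃ v : V, v ∈ Aset G' P ∩ Wset P ∧
      ∃ i c, e.1 = s(Sum.inl i, Sum.inr c) ∧ P v = i.1 ∧
        (spannedGraph G' P).connectedComponentMk v = c.1 := by
    rintro ⟨e, he⟩
    obtain ⟨i, c, v, hef, h1, h2⟩ := Bgr_edge_form G' P e he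
    refine ⟨v, ⟨?_, ?_⟩, i, c, hef, h1, h2⟩
    · exact mem_A_of_mult G' P (h2 ▸ c.2)
    · show P v ≠ Fin.last k
      rw [h1]; exact i.2
  choose f hfA hf using cls
  have hinj : Function.Injective (fun e => (⟨f e, hfA e⟩ : ↥(Aset G' P ∩ Wset P))) := by
    rintro e₁ e₂ h
    simp only [Subtype.mk_eq_mk] at h
    obtain ⟨i₁, c₁, he₁, hP₁, hc₁⟩ := hf e₁
    obtain ⟨i₂, c₂, he₂, hP₂, hc₂⟩ := hf e₂
    have hi : i₁ = i₂ := Subtype.ext (by rw [← hP₁, ← hP₂, h])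
    have hcc : c₁ = c₂ := Subtype.ext (by rw [← hc₁, ← hc₂, h])
    exact Subtype.ext (by rw [he₁, he₂, hi, hcc])
  exact Nat.card_le_card_of_injective _ hinj

lemma count1 (hsuper : (auxGraph G' P).Connected) :
    k + C2count G' P + Nat.card ↥(Aset G' P ∩ (Wset P)ᶜ) ≤ Vprime G' P + 1 := by
  classical
  have hBcard : Nat.card ({i : Fin (k + 1) // i ≠ Fin.last k} ⊕
      {c : (spannedGraph G' P).ConnectedComponent // multC G' P c}) = k + C2count G' P := by
    have hblk : Nat.card {i : Fin (k + 1) // i ≠ Fin.last k} = k := by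
      rw [Nat.card_eq_fintype_card]
      simp [Fintype.card_subtype_compl]
    have hcomp : Nat.card {c : (spannedGraph G' P).ConnectedComponent // multC G' P c} =
        C2count G' P := rfl
    rw [Nat.card_sum, hblk, hcomp]
  have h1 := stmt11_conn_card_le _ (Bgr_connected G' P hsuper)
  have h2 := Bgr_edge_card G' P
  have h3 : Vprime G' P =
      Nat.card ↥(Aset G' P ∩ Wset P) + Nat.card ↥(Aset G' P ∩ (Wset P)ᶜ) := by
    have : Vprime G' P = Nat.card ↥(Aset G' P) := rfl
    rw [this, Nat.card_coe_set_eq, Nat.card_coe_set_eq, Nat.card_coe_set_eq]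
    nth_rewrite 1 [← Set.inter_union_compl (Aset G' P) (Wset P)]
    exact Set.ncard_union_eq (disjoint_compl_right.mono inf_le_right inf_le_right)
      (Set.toFinite _) (Set.toFinite _)
  omega

lemma count2
    (h7 : ∀ S : Set V, 2 * Nat.card S ≤ Fintype.card V →
      (∃ v ∈ S, 3 ≤ Nat.card (G'.neighborSet v)) →
      3 ≤ Nat.card {v : V // v ∉ S ∧ ∃ u ∈ S, G'.Adj u v})
    (hsm : 2 * Nat.card ↥(Wset P) ≤ Fintype.card V)
    (hdeg3 : ∃ v : V, P v ≠ Fin.last k ∧ 3 ≤ Nat.card (G'.neighborSet v)) :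
    3 ≤ Nat.card ↥(Aset G' P ∩ (Wset P)ᶜ) := by
  obtain ⟨v₀, hv₀, hd₀⟩ := hdeg3
  have h := h7 (Wset P) hsm ⟨v₀, hv₀, hd₀⟩
  refine le_trans h (Nat.card_le_card_of_injective
    (fun v => (⟨v.1, ?_, ?_⟩ : ↥(Aset G' P ∩ (Wset P)ᶜ))) ?_)
  · obtain ⟨hv, u, hu, huv⟩ := v.2
    have hPuv : P u ≠ P v.1 := by
      intro hh
      have hu' : P u ≠ Fin.last k := hu
      exact hv (show P v.1 ≠ Fin.last k from hh ▸ hu')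
    exact ⟨s(u, v.1), cross_of_adj G' P huv hPuv, by simp⟩
  · exact v.2.1
  · intro a b h
    simp only [Subtype.mk_eq_mk] at h
    exact Subtype.ext (congrArg (fun x : ↥(Aset G' P ∩ (Wset P)ᶜ) => x.1) h)

lemma count3 (hne : Nonempty V) (Λ : ℝ) (hΛ0 : 0 ≤ Λ)
    (hdeg : ∀ v : V, (Nat.card (G'.neighborSet v) : ℝ) ≤ Λ) :
    (Nat.card (edgeBoundary G' (Wset P)) : ℝ) ≤
      (Nat.card ↥(Aset G' P ∩ (Wset P)ᶜ) : ℝ) * Λ := by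
  classical
  set E₀ : Set (Sym2 V) := edgeBoundary G' (Wset P) with hE₀
  set s : Finset (Sym2 V) := (Set.toFinite E₀).toFinset with hs
  set t : Finset V := (Set.toFinite (Aset G' P ∩ (Wset P)ᶜ)).toFinset with ht
  set f : Sym2 V → V := fun e =>
    if h : ∃ a b, e = s(a, b) ∧ G'.Adj a b ∧ a ∈ Wset P ∧ b ∉ Wset P then
      h.choose_spec.choose else Classical.arbitrary V with hf
  set g : Sym2 V → V := fun e =>
    if h : ∃ a b, e = s(a, b) ∧ G'.Adj a b ∧ a ∈ Wset P ∧ b ∉ Wset P then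
      h.choose else Classical.arbitrary V with hg
  have hQ : ∀ e ∈ s, e = s(g e, f e) ∧ G'.Adj (g e) (f e) ∧ g e ∈ Wset P ∧ f e ∉ Wset P := by
    intro e he
    rw [hs, Set.Finite.mem_toFinset] at he
    have h : ∃ a b, e = s(a, b) ∧ G'.Adj a b ∧ a ∈ Wset P ∧ b ∉ Wset P := he
    simp only [hf, hg, dif_pos h]
    exact h.choose_spec.choose_spec
  have hmem : ∀ e ∈ s, f e ∈ t := by
    intro e he
    obtain ⟨hef, hadj, hgW, hfW⟩ := hQ e he
    rw [ht, Set.Finite.mem_toFinset]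
    refine ⟨⟨s(g e, f e), cross_of_adj G' P hadj ?_, by simp⟩, hfW⟩
    intro hh
    have hg' : P (g e) ≠ Fin.last k := hgW
    exact hfW (show P (f e) ≠ Fin.last k from hh ▸ hg')
  have hcard := Finset.card_eq_sum_card_fiberwise hmem
  have hfib : ∀ v ∈ t, ((s.filter (fun e => f e = v)).card : ℝ) ≤ Λ := by
    intro v hv
    have hle : (s.filter (fun e => f e = v)).card ≤ (G'.neighborFinset v).card := by
      refine Finset.card_le_card_of_injOn g ?_ ?_
      · intro e he
        rw [Finset.mem_coe, Finset.mem_filter] at he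
        obtain ⟨hef, hadj, hgW, hfW⟩ := hQ e he.1
        rw [Finset.mem_coe, SimpleGraph.mem_neighborFinset, ← he.2]
        exact hadj.symm
      · intro e₁ he₁ e₂ he₂ hgeq
        simp only [Finset.coe_filter, Set.mem_setOf_eq] at he₁ he₂
        obtain ⟨hef₁, _, _, _⟩ := hQ e₁ he₁.1
        obtain ⟨hef₂, _, _, _⟩ := hQ e₂ he₂.1
        rw [hef₁, hef₂, hgeq, he₁.2, he₂.2]
    have hdv : ((G'.neighborFinset v).card : ℝ) ≤ Λ := by
      have : (G'.neighborFinset v).card = Nat.card (G'.neighborSet v) := by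
        rw [Nat.card_eq_fintype_card, SimpleGraph.neighborFinset_def, Set.toFinset_card]
      rw [this]; exact hdeg v
    exact le_trans (by exact_mod_cast hle) hdv
  have hE₀card : (Nat.card E₀ : ℝ) = (s.card : ℝ) := by
    rw [Nat.card_coe_set_eq, Set.ncard_eq_toFinset_card _ (Set.toFinite E₀)]
  have htcard : (t.card : ℝ) = (Nat.card ↥(Aset G' P ∩ (Wset P)ᶜ) : ℝ) := by
    rw [Nat.card_coe_set_eq, Set.ncard_eq_toFinset_card _ (Set.toFinite _)]
  calc (Nat.card E₀ : ℝ) = (s.card : ℝ) := hE₀card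
    _ = ∑ v ∈ t, ((s.filter (fun e => f e = v)).card : ℝ) := by
        rw [hcard]; push_cast; ring
    _ ≤ ∑ v ∈ t, Λ := Finset.sum_le_sum hfib
    _ = (t.card : ℝ) * Λ := by rw [Finset.sum_const]; ring
    _ = _ := by rw [htcard]

end Main

/-- First technical estimate: if the non-last blocks of a connected partition of an
`(n,ε,γ)`-good graph (forming a single super-block, one of them containing a vertex of degree
at least 3) have total size at most `N/2`, then
`V' - C₂ - C₁ ≥ c_ε (s₁+⋯+s_{k-1}) / (400 log log n)` and `V' - C₂ - C₁ ≥ 2`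
(here the partition has `k+1` blocks, so `C₁ = k`). -/
theorem stmt11 (ε γ : ℝ) (hε0 : 0 < ε) (hε1 : ε < 1) (hγ : 0 < γ)
    (n N k : ℕ) {V : Type*} [Fintype V] (hN : Fintype.card V = N)
    (G' : SimpleGraph V) (hgood : IsGood n ε γ G')
    (P : V → Fin (k + 1)) (hpart : ConnPartition G' P)
    (hlast : ∀ i : Fin (k + 1),
      Nat.card (P ⁻¹' {i} : Set V) ≤ Nat.card (P ⁻¹' {Fin.last k} : Set V))
    (hsuper : (auxGraph G' P).Connected)
    (hsmall : (Nat.card {v : V // P v ≠ Fin.last k} : ℝ) ≤ (N : ℝ) / 2)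
    (hdeg3 : ∃ v : V, P v ≠ Fin.last k ∧ 3 ≤ Nat.card (G'.neighborSet v)) :
    (γ * ε) * (Nat.card {v : V // P v ≠ Fin.last k} : ℝ) / (400 * Real.log (Real.log n)) ≤
      (((Vprime G' P : ℤ) - (C2count G' P : ℤ) - (k : ℤ) : ℤ) : ℝ) ∧
    (2 : ℤ) ≤ (Vprime G' P : ℤ) - (C2count G' P : ℤ) - (k : ℤ) := by
  classical
  obtain ⟨g1, g2, g3, g4, g5, g6, g7⟩ := hgood
  obtain ⟨v₀, hv₀P, hv₀d⟩ := hdeg3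
  haveI : Nonempty V := ⟨v₀⟩
  set Λ : ℝ := Real.log (Real.log n) with hΛ
  have hΛ2 : (2 : ℝ) ≤ 100 * Λ := by
    have h1 := (g5 v₀).1
    have h2 : (2 : ℝ) ≤ (Nat.card (G'.neighborSet v₀) : ℝ) := by exact_mod_cast (g5 v₀).2
    linarith
  have hΛpos : (0 : ℝ) < Λ := by linarith
  have hWeq : Nat.card {v : V // P v ≠ Fin.last k} = Nat.card ↥(Wset P) := rfl
  set sW : ℕ := Nat.card ↥(Wset P) with hsW
  set M : ℕ := Nat.card ↥(Aset G' P ∩ (Wset P)ᶜ) with hMdef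
  have hsm2 : 2 * sW ≤ Fintype.card V := by
    have hr : (2 * sW : ℝ) ≤ (Fintype.card V : ℝ) := by
      rw [hWeq] at hsmall
      rw [hN]
      push_cast
      linarith
    exact_mod_cast hr
  have hM3 : 3 ≤ M := count2 G' P g7 hsm2 ⟨v₀, hv₀P, hv₀d⟩
  have hN1 : k + C2count G' P + M ≤ Vprime G' P + 1 := count1 G' P hsuper
  have goal2 : (2 : ℤ) ≤ (Vprime G' P : ℤ) - (C2count G' P : ℤ) - (k : ℤ) := by omega
  refine ⟨?_, goal2⟩
  rw [hWeq]
  set Wf : Finset V := Finset.univ.filter (fun v => P v ≠ Fin.last k) with hWfdef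
  have hWfW : (↑Wf : Set V) = Wset P := by
    ext v; simp [hWfdef, Wset]
  have hWfcard : Wf.card = sW := by
    have h1 : sW = (Wset P).ncard := Nat.card_coe_set_eq _
    rw [h1, ← hWfW, Set.ncard_coe_finset]
  have hWfne : Wf.Nonempty := ⟨v₀, by simp [hWfdef, hv₀P]⟩
  have hexp := g2 Wf hWfne (by rw [hWfcard]; exact hsm2)
  rw [hWfW] at hexp
  have hsum : (2 * sW : ℝ) ≤ ∑ v ∈ Wf, (Nat.card (G'.neighborSet v) : ℝ) := by
    have hlower : ∀ v ∈ Wf, (2 : ℝ) ≤ (Nat.card (G'.neighborSet v) : ℝ) := by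
      intro v _; exact_mod_cast (g5 v).2
    have := Finset.card_nsmul_le_sum Wf (fun v => (Nat.card (G'.neighborSet v) : ℝ)) 2 hlower
    rw [nsmul_eq_mul, hWfcard] at this
    linarith
  have hbd : (Nat.card (edgeBoundary G' (Wset P)) : ℝ) ≤ (M : ℝ) * (100 * Λ) :=
    count3 G' P ⟨v₀⟩ (100 * Λ) (by linarith) (fun v => (g5 v).1)
  have hchain : (γ * ε) * (2 * sW) ≤ (M : ℝ) * (100 * Λ) := by
    refine le_trans (le_trans ?_ hexp) hbd
    exact mul_le_mul_of_nonneg_left hsum (by positivity)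
  have hγε : (0 : ℝ) < γ * ε := by positivity
  have hVC : (k : ℝ) + C2count G' P + M ≤ Vprime G' P + 1 := by exact_mod_cast hN1
  have hM3' : (3 : ℝ) ≤ (M : ℝ) := by exact_mod_cast hM3
  push_cast
  rw [div_le_iff₀ (by positivity)]
  set R : ℝ := (Vprime G' P : ℝ) - C2count G' P - k with hRdef
  have hR1 : (M : ℝ) - 1 ≤ R := by rw [hRdef]; linarith
  have hM8R : (M : ℝ) ≤ 8 * R := by linarith
  have hmul : (M : ℝ) * Λ ≤ 8 * R * Λ := mul_le_mul_of_nonneg_right hM8R hΛpos.le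
  nlinarith [hchain, hmul, hΛpos, hγε, Nat.cast_nonneg (α := ℝ) sW]
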